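/- Let X ⊆ (S³)³ be a compact set of configurations eight-partitioning all mass distributions with connected support on ℝ³. If a general (possibly disconnected-support) mass distribution μ on ℝ³ is given, then there is still a configuration in X that eight-partitions μ. (The proof perturbs μ by mixing with a Gaussian and passes to a limit.) -/

import Mathlib

open MeasureTheory
open scoped RealInnerProductSpace

noncomputable section

abbrev E3 := EuclideanSpace ℝ (Fin 3)
abbrev E4 := EuclideanSpace ℝ (Fin 4)

/-- Open half-space of ℝ³ determined by a point `w ∈ S³ ⊂ ℝ⁴` (parameterizing the oriented
plane `{x | w₀x₀ + w₁x₁ + w₂x₂ + w₃ = 0}`): the positive (`true`) or negative (`false`)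
side. -/
def sHalf (w : E4) (s : Bool) : Set E3 :=
  if s then {x | 0 < w 0 * x 0 + w 1 * x 1 + w 2 * x 2 + w 3}
  else {x | w 0 * x 0 + w 1 * x 1 + w 2 * x 2 + w 3 < 0}

/-- Open octant of a triple of planes parameterized by `(S³)³`. -/
def sOctant (H : Fin 3 → E4) (α : Fin 3 → Bool) : Set E3 :=
  ⋂ i, sHalf (H i) (α i)

def IsMassDistribution (μ : Measure E3) : Prop :=
  IsFiniteMeasure μ ∧ ∀ v : E3, v ≠ 0 → ∀ a : ℝ, μ {x | ⟪v, x⟫ = a} = 0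

/-- The support of a measure on ℝ³. -/
def msupport (μ : Measure E3) : Set E3 :=
  {x | ∀ r > 0, 0 < μ (Metric.ball x r)}

/-! ### Auxiliary material: a Gaussian-type reference measure on `ℝ³` -/

open Filter
open scoped ENNReal Topology

/-- A Gaussian-type finite measure on `ℝ³`, with everywhere positive density w.r.t. volume. -/
def gmeas : Measure E3 := volume.withDensity fun x => ENNReal.ofReal (Real.exp (-‖x‖^2))

lemma gmeas_dens_meas : Measurable fun x : E3 => ENNReal.ofReal (Real.exp (-‖x‖^2)) := by
  apply Measurable.ennreal_ofReal
  exact (Real.continuous_exp.comp (continuous_norm.pow 2).neg).measurable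

lemma gauss_integrable : Integrable (fun x : E3 => Real.exp (-‖x‖^2)) := by
  have h := GaussianFourier.integrable_cexp_neg_mul_sq_norm_add (V := E3) (b := 1)
    (by norm_num) 0 0
  have h2 := h.norm
  apply h2.congr
  filter_upwards with x
  simp [Complex.norm_exp, ← Complex.ofReal_pow]

instance gmeas_finite : IsFiniteMeasure gmeas :=
  isFiniteMeasure_withDensity_ofReal gauss_integrable.2

lemma gmeas_ac : gmeas ≪ volume := withDensity_absolutelyContinuous _ _

lemma gmeas_ball_pos (x : E3) {r : ℝ} (hr : 0 < r) : 0 < gmeas (Metric.ball x r) := by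
  rw [pos_iff_ne_zero, Ne, gmeas, withDensity_apply_eq_zero gmeas_dens_meas]
  have h1 : {x : E3 | ENNReal.ofReal (Real.exp (-‖x‖^2)) ≠ 0} = Set.univ := by
    ext y
    simp only [Set.mem_setOf_eq, Set.mem_univ, iff_true, Ne, ← pos_iff_ne_zero]
    exact ENNReal.ofReal_pos.2 (Real.exp_pos _)
  rw [h1, Set.univ_inter]
  exact (Metric.measure_ball_pos volume x hr).ne'

lemma volume_hyperplane (v : E3) (hv : v ≠ 0) (a : ℝ) :
    volume {x : E3 | ⟪v, x⟫ = a} = 0 := by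
  set K : Submodule ℝ E3 := LinearMap.ker (innerSL ℝ v : E3 →ₗ[ℝ] ℝ) with hKdef
  have hK : K ≠ ⊤ := by
    intro h
    have : v ∈ K := h ▸ Submodule.mem_top
    rw [hKdef, LinearMap.mem_ker] at this
    simp only [ContinuousLinearMap.coe_coe, innerSL_apply_apply] at this
    exact hv (inner_self_eq_zero.mp this)
  have h0 : volume (K : Set E3) = 0 := Measure.addHaar_submodule volume K hK
  have hvnorm : ‖v‖ ^ 2 ≠ 0 := pow_ne_zero 2 (norm_ne_zero_iff.2 hv)
  set x0 : E3 := (a / ‖v‖ ^ 2) • v with hx0def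
  have hx0 : ⟪v, x0⟫ = a := by
    rw [hx0def, real_inner_smul_right, real_inner_self_eq_norm_sq]
    field_simp
  have hset : {x : E3 | ⟪v, x⟫ = a} = (fun x => x + (-x0)) ⁻¹' (K : Set E3) := by
    ext x
    simp only [Set.mem_preimage, SetLike.mem_coe, hKdef, LinearMap.mem_ker,
      ContinuousLinearMap.coe_coe, innerSL_apply_apply, Set.mem_setOf_eq]
    rw [inner_add_right, inner_neg_right, hx0]
    constructor <;> intro h <;> linarith
  rw [hset, measure_preimage_add_right volume (-x0) _, h0]

lemma gmeas_massdist : IsMassDistribution gmeas :=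
  ⟨inferInstance, fun v hv a => gmeas_ac (volume_hyperplane v hv a)⟩

/-- The (possibly degenerate) plane in `ℝ³` determined by `w : ℝ⁴`. -/
def planeSet (w : E4) : Set E3 := {x | w 0 * x 0 + w 1 * x 1 + w 2 * x 2 + w 3 = 0}

lemma massdist_plane (ν : Measure E3) (hν : IsMassDistribution ν) (w : E4) (hw : w ≠ 0) :
    ν (planeSet w) = 0 := by
  set v : E3 := (WithLp.equiv 2 (Fin 3 → ℝ)).symm ![w 0, w 1, w 2] with hvdef
  have hv0 : v 0 = w 0 := rfl
  have hv1 : v 1 = w 1 := rfl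
  have hv2 : v 2 = w 2 := rfl
  by_cases hv : v = 0
  · have h0 : w 0 = 0 := by rw [← hv0, hv]; rfl
    have h1 : w 1 = 0 := by rw [← hv1, hv]; rfl
    have h2 : w 2 = 0 := by rw [← hv2, hv]; rfl
    have h3 : w 3 ≠ 0 := by
      intro h3
      apply hw
      ext i
      fin_cases i <;> simp [h0, h1, h2, h3]
    have : planeSet w = ∅ := by
      ext x
      simp [planeSet, h0, h1, h2, h3]
    rw [this, measure_empty]
  · have key := hν.2 v hv (-(w 3))
    have hset : planeSet w = {x : E3 | ⟪v, x⟫ = -(w 3)} := by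
      ext x
      simp only [planeSet, Set.mem_setOf_eq, PiLp.inner_apply, RCLike.inner_apply,
        conj_trivial, Fin.sum_univ_three, hv0, hv1, hv2]
      constructor <;> intro h <;> linarith
    rw [hset]; exact key

lemma mem_sHalf_true (w : E4) (x : E3) :
    x ∈ sHalf w true ↔ 0 < w 0 * x 0 + w 1 * x 1 + w 2 * x 2 + w 3 := Iff.rfl

lemma mem_sHalf_false (w : E4) (x : E3) :
    x ∈ sHalf w false ↔ w 0 * x 0 + w 1 * x 1 + w 2 * x 2 + w 3 < 0 := Iff.rfl

lemma isOpen_sHalf (w : E4) (s : Bool) : IsOpen (sHalf w s) := by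
  have hg : Continuous fun x : E3 => w 0 * x 0 + w 1 * x 1 + w 2 * x 2 + w 3 := by
    fun_prop
  cases s with
  | false => exact isOpen_lt hg continuous_const
  | true => exact isOpen_lt continuous_const hg

lemma measurableSet_sOctant (H : Fin 3 → E4) (α : Fin 3 → Bool) :
    MeasurableSet (sOctant H α) :=
  MeasurableSet.iInter fun i => (isOpen_sHalf (H i) (α i)).measurableSet

lemma continuous_gx (x : E3) :
    Continuous fun w : E4 => w 0 * x 0 + w 1 * x 1 + w 2 * x 2 + w 3 := by fun_prop

/-- Continuity of the measure of the octant in the configuration, at configurations of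
nondegenerate planes, for mass distributions. -/
lemma tendsto_measure_sOctant (ν : Measure E3) (hν : IsMassDistribution ν)
    (H : ℕ → Fin 3 → E4) (L : Fin 3 → E4) (hHL : Tendsto H atTop (𝓝 L))
    (hL : ∀ i, L i ≠ 0) (α : Fin 3 → Bool) :
    Tendsto (fun n => ν (sOctant (H n) α)) atTop (𝓝 (ν (sOctant L α))) := by
  haveI := hν.1
  have hrw : ∀ (W : Fin 3 → E4),
      ν (sOctant W α) = ∫⁻ x, (sOctant W α).indicator 1 x ∂ν :=
    fun W => (lintegral_indicator_one (measurableSet_sOctant W α)).symm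
  simp only [hrw]
  apply tendsto_lintegral_of_dominated_convergence (bound := fun _ => 1)
  · exact fun n => measurable_one.indicator (measurableSet_sOctant (H n) α)
  · intro n
    filter_upwards with x
    by_cases hx : x ∈ sOctant (H n) α <;> simp [hx]
  · rw [lintegral_one]; exact (measure_lt_top ν _).ne
  · have hnull : ν (⋃ i, planeSet (L i)) = 0 :=
      measure_iUnion_null fun i => massdist_plane ν hν (L i) (hL i)
    filter_upwards [measure_eq_zero_iff_ae_notMem.mp hnull] with x hx
    have hx' : ∀ i, x ∉ planeSet (L i) := by
      intro i hi; exact hx (Set.mem_iUnion.2 ⟨i, hi⟩)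
    set g : E4 → ℝ := fun w => w 0 * x 0 + w 1 * x 1 + w 2 * x 2 + w 3 with hgdef
    have key : ∀ i, ∀ᶠ n in atTop, (x ∈ sHalf (H n i) (α i) ↔ x ∈ sHalf (L i) (α i)) := by
      intro i
      have hgi : g (L i) ≠ 0 := hx' i
      have htend : Tendsto (fun n => g (H n i)) atTop (𝓝 (g (L i))) :=
        ((continuous_gx x).tendsto (L i)).comp (((continuous_apply i).tendsto L).comp hHL)
      rcases hgi.lt_or_gt with hneg | hpos
      · filter_upwards [htend.eventually_lt_const hneg] with n hn
        cases hb : α i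
        · rw [mem_sHalf_false, mem_sHalf_false]
          exact ⟨fun _ => hneg, fun _ => hn⟩
        · rw [mem_sHalf_true, mem_sHalf_true]
          constructor <;> intro h
          · exact absurd hn (not_lt.2 h.le)
          · exact absurd hneg (not_lt.2 h.le)
      · filter_upwards [htend.eventually_const_lt hpos] with n hn
        cases hb : α i
        · rw [mem_sHalf_false, mem_sHalf_false]
          constructor <;> intro h
          · exact absurd hn (not_lt.2 h.le)
          · exact absurd hpos (not_lt.2 h.le)
        · rw [mem_sHalf_true, mem_sHalf_true]
          exact ⟨fun _ => hpos, fun _ => hn⟩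
    have keyall : ∀ᶠ n in atTop, x ∈ sOctant (H n) α ↔ x ∈ sOctant L α := by
      filter_upwards [eventually_all.2 key] with n hn
      simp only [sOctant, Set.mem_iInter]
      exact forall_congr' hn
    apply Tendsto.congr' _ tendsto_const_nhds
    filter_upwards [keyall] with n hn
    by_cases hmem : x ∈ sOctant L α
    · rw [Set.indicator_of_mem hmem, Set.indicator_of_mem (hn.2 hmem)]
    · rw [Set.indicator_of_notMem hmem, Set.indicator_of_notMem (fun h => hmem (hn.1 h))]

/-- Limit argument for general mass distributions: if `X ⊆ (S³)³` is a compact set of plane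
configurations eight-partitioning every mass distribution with connected support, then every
(possibly disconnected-support) mass distribution `μ` is eight-partitioned by some
configuration in `X`. -/
theorem stmt15 (X : Set (Fin 3 → E4)) (hXs : ∀ H ∈ X, ∀ i, ‖H i‖ = 1) (hXc : IsCompact X)
    (hpart : ∀ μ : Measure E3, IsMassDistribution μ → IsConnected (msupport μ) →
      ∃ H ∈ X, ∀ α : Fin 3 → Bool, μ (sOctant H α) = μ Set.univ / 8)
    (μ : Measure E3) (hμ : IsMassDistribution μ) :
    ∃ H ∈ X, ∀ α : Fin 3 → Bool, μ (sOctant H α) = μ Set.univ / 8 := by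
  haveI := hμ.1
  -- the mixing coefficients
  set c : ℕ → ℝ≥0∞ := fun n => ((n : ℝ≥0∞) + 1)⁻¹ with hcdef
  have hc_ne_zero : ∀ n, c n ≠ 0 := by
    intro n
    simp [hcdef, ENNReal.inv_ne_zero]
  have hc_ne_top : ∀ n, c n ≠ ∞ := by
    intro n
    simp [hcdef, ENNReal.inv_ne_top]
  have hc_tendsto : Tendsto c atTop (𝓝 0) := by
    have h1 : Tendsto (fun n : ℕ => ((n : ℝ≥0∞))⁻¹) atTop (𝓝 0) :=
      ENNReal.tendsto_inv_nat_nhds_zero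
    have h2 : Tendsto (fun n : ℕ => n + 1) atTop atTop := tendsto_add_atTop_nat 1
    have := h1.comp h2
    apply this.congr
    intro n
    simp [hcdef]
  -- the perturbed measures
  set ν : ℕ → Measure E3 := fun n => μ + c n • gmeas with hνdef
  have hν_apply : ∀ n (s : Set E3), ν n s = μ s + c n * gmeas s := by
    intro n s
    simp [hνdef, Measure.add_apply, Measure.smul_apply, smul_eq_mul]
  have hν_massdist : ∀ n, IsMassDistribution (ν n) := by
    intro n
    constructor
    · constructor
      rw [hν_apply]
      exact ENNReal.add_lt_top.2 ⟨measure_lt_top μ _,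
        ENNReal.mul_lt_top (hc_ne_top n).lt_top (measure_lt_top gmeas _)⟩
    · intro v hv a
      rw [hν_apply, hμ.2 v hv a, gmeas_massdist.2 v hv a, mul_zero, add_zero]
  have hν_conn : ∀ n, IsConnected (msupport (ν n)) := by
    intro n
    have hsupp : msupport (ν n) = Set.univ := by
      apply Set.eq_univ_of_forall
      intro x r hr
      rw [hν_apply]
      calc (0 : ℝ≥0∞) < c n * gmeas (Metric.ball x r) :=
            ENNReal.mul_pos (hc_ne_zero n) (gmeas_ball_pos x hr).ne'
        _ ≤ μ (Metric.ball x r) + c n * gmeas (Metric.ball x r) := le_add_self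
    rw [hsupp]
    exact isConnected_univ
  -- choose partitioning configurations for the perturbed measures
  choose H hHX hHpart using fun n => hpart (ν n) (hν_massdist n) (hν_conn n)
  -- extract a convergent subsequence
  obtain ⟨L, hLX, φ, hφ, hTend⟩ := hXc.tendsto_subseq hHX
  refine ⟨L, hLX, fun α => ?_⟩
  have hLne : ∀ i, L i ≠ 0 := by
    intro i
    have := hXs L hLX i
    intro h
    rw [h, norm_zero] at this
    norm_num at this
  -- limit of the μ-part
  have hA : Tendsto (fun n => μ (sOctant (H (φ n)) α)) atTop (𝓝 (μ (sOctant L α))) :=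
    tendsto_measure_sOctant μ hμ (H ∘ φ) L hTend hLne α
  -- limit of the Gaussian part
  have hcφ : Tendsto (fun n => c (φ n)) atTop (𝓝 0) :=
    hc_tendsto.comp (hφ.tendsto_atTop)
  have hC : Tendsto (fun n => c (φ n) * gmeas (sOctant (H (φ n)) α)) atTop (𝓝 0) := by
    have hub : Tendsto (fun n => c (φ n) * gmeas Set.univ) atTop (𝓝 0) := by
      have := ENNReal.Tendsto.mul_const hcφ
        (Or.inr (measure_lt_top gmeas Set.univ).ne)
      simpa using this
    apply tendsto_of_tendsto_of_tendsto_of_le_of_le tendsto_const_nhds hub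
    · intro n; exact zero_le
    · intro n
      exact mul_le_mul_of_nonneg_left (measure_mono (Set.subset_univ _)) zero_le
  -- the combined sequence
  have hAC : Tendsto (fun n => μ (sOctant (H (φ n)) α) + c (φ n) * gmeas (sOctant (H (φ n)) α))
      atTop (𝓝 (μ (sOctant L α))) := by
    have := hA.add hC
    simpa using this
  -- the sequence is equal to (μ univ + c n * gmeas univ) / 8
  have hEq : ∀ n, μ (sOctant (H (φ n)) α) + c (φ n) * gmeas (sOctant (H (φ n)) α)
      = (μ Set.univ + c (φ n) * gmeas Set.univ) / 8 := by
    intro n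
    rw [← hν_apply, ← hν_apply]
    exact hHpart (φ n) α
  -- the RHS tends to μ univ / 8
  have hD : Tendsto (fun n => (μ Set.univ + c (φ n) * gmeas Set.univ) / 8) atTop
      (𝓝 (μ Set.univ / 8)) := by
    have hnum : Tendsto (fun n => μ Set.univ + c (φ n) * gmeas Set.univ) atTop
        (𝓝 (μ Set.univ)) := by
      have h1 : Tendsto (fun n => c (φ n) * gmeas Set.univ) atTop (𝓝 0) := by
        have := ENNReal.Tendsto.mul_const hcφ
          (Or.inr (measure_lt_top gmeas Set.univ).ne)
        simpa using this
      have := (tendsto_const_nhds (x := μ Set.univ) (f := atTop)).add h1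
      simpa using this
    simp only [div_eq_mul_inv]
    have := ENNReal.Tendsto.mul_const hnum (Or.inr (by norm_num : (8 : ℝ≥0∞)⁻¹ ≠ ∞))
    exact this
  have hAC' : Tendsto (fun n => (μ Set.univ + c (φ n) * gmeas Set.univ) / 8) atTop
      (𝓝 (μ (sOctant L α))) := by
    apply hAC.congr
    intro n
    exact hEq n
  exact tendsto_nhds_unique hAC' hD
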